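/- Let M be a symmetric positive definite 2n×2n real matrix and Ω_M = {z ∈ ℝ^{2n} : ⟨Mz, z⟩ ≤ ℏ}. Then Ω_M is quantum admissible (i.e. there exists a linear symplectic automorphism S of ℝ^{2n} with S(B^{2n}(√ℏ)) ⊆ Ω_M) if and only if Ω_M^{ℏ,σ} ⊆ Ω_M. -/

import Mathlib

open MeasureTheory Real Metric
open scoped RealInnerProductSpace Pointwise

noncomputable section

/-- `ℝⁿ` with its Euclidean structure. -/
abbrev En (n : ℕ) := EuclideanSpace ℝ (Fin n)

/-- The phase space `ℝ²ⁿ = ℝⁿ × ℝⁿ` with its Euclidean structure, the first block of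
coordinates being the positions `x` and the second block the momenta `p`. -/
abbrev PS (n : ℕ) := EuclideanSpace ℝ (Fin n ⊕ Fin n)

/-- The standard symplectic matrix `J = [[0, I], [-I, 0]]`. -/
def Jmat (n : ℕ) : Matrix (Fin n ⊕ Fin n) (Fin n ⊕ Fin n) ℝ :=
  Matrix.fromBlocks 0 1 (-1) 0

/-- The standard symplectic form `σ(z, z') = ⟨Jz, z'⟩`. -/
def symp (n : ℕ) (z z' : PS n) : ℝ := ⟪(Matrix.toEuclideanLin (Jmat n)) z, z'⟫

/-- The quadratic form `z ↦ ⟨Mz, z⟩`. -/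
def qf {m : Type*} [Fintype m] [DecidableEq m] (M : Matrix m m ℝ)
    (z : EuclideanSpace ℝ m) : ℝ := ⟪(Matrix.toEuclideanLin M) z, z⟫

/-- The symplectic `ℏ`-polar dual `Ω^{ℏ,σ} = {z' : ∀ z ∈ Ω, σ(z, z') ≤ ℏ}`. -/
def sympDual (n : ℕ) (ℏ : ℝ) (Ω : Set (PS n)) : Set (PS n) :=
  {z' | ∀ z ∈ Ω, symp n z z' ≤ ℏ}

/-- A linear automorphism of `ℝ²ⁿ` is symplectic if it preserves the symplectic form. -/
def IsSymplectic {n : ℕ} (S : PS n ≃ₗ[ℝ] PS n) : Prop :=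
  ∀ z z', symp n (S z) (S z') = symp n z z'


namespace Matrix.PosSemidef
variable {m : Type*} [Fintype m] [DecidableEq m] {A : Matrix m m ℝ}

def sqrt (hA : A.PosSemidef) : Matrix m m ℝ :=
  (hA.1.eigenvectorUnitary : Matrix m m ℝ) *
    Matrix.diagonal (RCLike.ofReal ∘ Real.sqrt ∘ hA.1.eigenvalues) *
    star (hA.1.eigenvectorUnitary : Matrix m m ℝ)

lemma posSemidef_sqrt (hA : A.PosSemidef) : hA.sqrt.PosSemidef := by
  have hd : (Matrix.diagonal (RCLike.ofReal ∘ Real.sqrt ∘ hA.1.eigenvalues) :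
      Matrix m m ℝ).PosSemidef :=
    Matrix.PosSemidef.diagonal (fun i => by simp [RCLike.ofReal_real_eq_id, Real.sqrt_nonneg])
  exact hd.mul_mul_conjTranspose_same (hA.1.eigenvectorUnitary : Matrix m m ℝ)

lemma sqrt_mul_self (hA : A.PosSemidef) : hA.sqrt * hA.sqrt = A := by
  have hU' : star (hA.1.eigenvectorUnitary : Matrix m m ℝ) *
      (hA.1.eigenvectorUnitary : Matrix m m ℝ) = 1 := Unitary.coe_star_mul_self _
  have hE : (Matrix.diagonal (RCLike.ofReal ∘ Real.sqrt ∘ hA.1.eigenvalues) : Matrix m m ℝ) *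
      Matrix.diagonal (RCLike.ofReal ∘ Real.sqrt ∘ hA.1.eigenvalues) =
      Matrix.diagonal (RCLike.ofReal ∘ hA.1.eigenvalues) := by
    rw [Matrix.diagonal_mul_diagonal]; congr 1; funext i
    simp [RCLike.ofReal_real_eq_id, Real.mul_self_sqrt (hA.eigenvalues_nonneg i)]
  have hspec := hA.1.spectral_theorem
  rw [Unitary.conjStarAlgAut_apply] at hspec
  calc hA.sqrt * hA.sqrt = (hA.1.eigenvectorUnitary : Matrix m m ℝ) *
      (Matrix.diagonal (RCLike.ofReal ∘ Real.sqrt ∘ hA.1.eigenvalues) *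
        (star (hA.1.eigenvectorUnitary : Matrix m m ℝ) * (hA.1.eigenvectorUnitary : Matrix m m ℝ)) *
        Matrix.diagonal (RCLike.ofReal ∘ Real.sqrt ∘ hA.1.eigenvalues)) *
      star (hA.1.eigenvectorUnitary : Matrix m m ℝ) := by simp only [sqrt, Matrix.mul_assoc]
    _ = A := by rw [hU', Matrix.mul_one, hE]; exact hspec.symm

open scoped MatrixOrder in
lemma eq_of_sq_eq_sq {B : Matrix m m ℝ} (hA : A.PosSemidef) (hB : B.PosSemidef)
    (hAB : A ^ 2 = B ^ 2) : A = B := by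
  rw [← CFC.sqrt_sq A hA.nonneg, hAB, CFC.sqrt_sq B hB.nonneg]

end Matrix.PosSemidef

section AuxSection
open Matrix
set_option linter.unusedSectionVars false
namespace SGAux
variable {m : Type*} [Fintype m] [DecidableEq m]

lemma tEq {A : Matrix m m ℝ} (h : A.IsHermitian) : Aᵀ = A := by
  have := h.eq; rwa [Matrix.conjTranspose_eq_transpose_of_trivial] at this

lemma ctEq (A : Matrix m m ℝ) : Aᴴ = Aᵀ := by
  ext i j; simp [Matrix.conjTranspose_apply]

lemma psd_nonneg {A : Matrix m m ℝ} (h : A.PosSemidef) (x : m → ℝ) : 0 ≤ x ⬝ᵥ A *ᵥ x := by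
  simpa using h.dotProduct_mulVec_nonneg x

lemma pd_pos {A : Matrix m m ℝ} (h : A.PosDef) {x : m → ℝ} (hx : x ≠ 0) :
    0 < x ⬝ᵥ A *ᵥ x := by
  simpa using h.dotProduct_mulVec_pos hx

lemma dot_shift (A : Matrix m m ℝ) (x y : m → ℝ) : x ⬝ᵥ A *ᵥ y = (Aᵀ *ᵥ x) ⬝ᵥ y := by
  rw [dotProduct_mulVec, mulVec_transpose]

lemma dot_congr (A B : Matrix m m ℝ) (x y : m → ℝ) :
    (B *ᵥ x) ⬝ᵥ A *ᵥ (B *ᵥ y) = x ⬝ᵥ (Bᵀ * A * B) *ᵥ y := by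
  rw [mulVec_mulVec, dot_shift (A * B), dot_shift (Bᵀ * A * B), mulVec_mulVec]
  simp [transpose_mul, Matrix.mul_assoc]

lemma mulVec_ne_zero {B : Matrix m m ℝ} (hB : IsUnit B.det) {x : m → ℝ} (hx : x ≠ 0) :
    B *ᵥ x ≠ 0 := by
  intro h
  apply hx
  have : B⁻¹ *ᵥ (B *ᵥ x) = x := by
    rw [mulVec_mulVec, Matrix.nonsing_inv_mul _ hB, one_mulVec]
  rw [h, mulVec_zero] at this
  exact this.symm

lemma posdef_conj {A : Matrix m m ℝ} (hA : A.PosDef) {B : Matrix m m ℝ} (hB : IsUnit B.det) :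
    (Bᵀ * A * B).PosDef := by
  refine Matrix.PosDef.of_dotProduct_mulVec_pos ?_ ?_
  · show (Bᵀ * A * B)ᴴ = _
    rw [ctEq, transpose_mul, transpose_mul, transpose_transpose, tEq hA.isHermitian,
      Matrix.mul_assoc]
  · intro x hx
    have := pd_pos hA (mulVec_ne_zero hB hx)
    rw [dot_congr] at this
    simpa using this

lemma psd_posdef_of_det {A : Matrix m m ℝ} (hA : A.PosSemidef) (hdet : A.det ≠ 0) : A.PosDef := by
  refine Matrix.PosDef.of_dotProduct_mulVec_pos hA.1 (fun x hx => ?_)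
  have h0 : star x ⬝ᵥ A *ᵥ x ≠ 0 := fun h =>
    mulVec_ne_zero (isUnit_iff_ne_zero.2 hdet) hx ((hA.dotProduct_mulVec_zero_iff x).1 h)
  have := hA.dotProduct_mulVec_nonneg x
  exact lt_of_le_of_ne this (Ne.symm h0)

lemma pd_sqrt {A : Matrix m m ℝ} (hA : A.PosDef) : (hA.posSemidef).sqrt.PosDef := by
  apply psd_posdef_of_det hA.posSemidef.posSemidef_sqrt
  intro h
  apply hA.det_pos.ne'
  rw [← hA.posSemidef.sqrt_mul_self, det_mul, h, mul_zero]

-- Cauchy-Schwarz for PSD forms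
lemma cs {A : Matrix m m ℝ} (hA : A.PosSemidef) (x y : m → ℝ) :
    (x ⬝ᵥ A *ᵥ y) ^ 2 ≤ (x ⬝ᵥ A *ᵥ x) * (y ⬝ᵥ A *ᵥ y) := by
  have hB : hA.sqrt * hA.sqrt = A := hA.sqrt_mul_self
  have hBt : (hA.sqrt)ᵀ = hA.sqrt := tEq hA.posSemidef_sqrt.isHermitian
  have key : ∀ u v : m → ℝ, u ⬝ᵥ A *ᵥ v = (hA.sqrt *ᵥ u) ⬝ᵥ (hA.sqrt *ᵥ v) := by
    intro u v
    calc u ⬝ᵥ A *ᵥ v = u ⬝ᵥ (hA.sqrt * hA.sqrt) *ᵥ v := by rw [hB]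
    _ = (hA.sqrt *ᵥ u) ⬝ᵥ (hA.sqrt *ᵥ v) := by rw [← mulVec_mulVec, dot_shift, hBt]
  rw [key, key, key]
  simpa [dotProduct, sq] using
    Finset.sum_mul_sq_le_sq_mul_sq Finset.univ (hA.sqrt *ᵥ x) (hA.sqrt *ᵥ y)

lemma inv_antitone {A B : Matrix m m ℝ} (hA : A.PosDef) (hB : B.PosDef)
    (h : ∀ x, x ⬝ᵥ A *ᵥ x ≤ x ⬝ᵥ B *ᵥ x) (x : m → ℝ) :
    x ⬝ᵥ B⁻¹ *ᵥ x ≤ x ⬝ᵥ A⁻¹ *ᵥ x := by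
  have hAdet : IsUnit A.det := isUnit_iff_ne_zero.2 hA.det_pos.ne'
  have hBdet : IsUnit B.det := isUnit_iff_ne_zero.2 hB.det_pos.ne'
  have hAinvT : A⁻¹ᵀ = A⁻¹ := by rw [transpose_nonsing_inv, tEq hA.isHermitian]
  have hBinvT : B⁻¹ᵀ = B⁻¹ := by rw [transpose_nonsing_inv, tEq hB.isHermitian]
  set y := B⁻¹ *ᵥ x with hy
  set q := x ⬝ᵥ B⁻¹ *ᵥ x with hq
  -- q = y ⬝ᵥ B *ᵥ y
  have hq1 : q = y ⬝ᵥ B *ᵥ y := by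
    rw [hq, hy, dot_congr, hBinvT, Matrix.mul_assoc, Matrix.mul_nonsing_inv _ hBdet, Matrix.mul_one]
  -- y ⬝ᵥ x = q
  have hyx : y ⬝ᵥ A *ᵥ (A⁻¹ *ᵥ x) = q := by
    rw [mulVec_mulVec, Matrix.mul_nonsing_inv _ hAdet, one_mulVec, hy, ← hBinvT, ← dot_shift]
  have hcs := cs hA.posSemidef y (A⁻¹ *ᵥ x)
  rw [hyx] at hcs
  have h2 : (A⁻¹ *ᵥ x) ⬝ᵥ A *ᵥ (A⁻¹ *ᵥ x) = x ⬝ᵥ A⁻¹ *ᵥ x := by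
    rw [dot_congr, hAinvT, Matrix.mul_assoc, Matrix.mul_nonsing_inv _ hAdet, Matrix.mul_one]
  rw [h2] at hcs
  have h3 : q ^ 2 ≤ q * (x ⬝ᵥ A⁻¹ *ᵥ x) := by
    calc q ^ 2 ≤ (y ⬝ᵥ A *ᵥ y) * (x ⬝ᵥ A⁻¹ *ᵥ x) := hcs
    _ ≤ (y ⬝ᵥ B *ᵥ y) * (x ⬝ᵥ A⁻¹ *ᵥ x) := by
        apply mul_le_mul_of_nonneg_right (h y)
        exact psd_nonneg hA.inv.posSemidef x
    _ = q * (x ⬝ᵥ A⁻¹ *ᵥ x) := by rw [← hq1]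
  rcases le_or_gt q 0 with h0 | h0
  · exact le_trans h0 (psd_nonneg hA.inv.posSemidef x)
  · nlinarith

variable {m : Type*} [Fintype m] [DecidableEq m]

lemma ctEq' (A : Matrix m m ℝ) : Aᴴ = Aᵀ := by
  ext i j; simp [Matrix.conjTranspose_apply]

lemma psd_nonneg' {A : Matrix m m ℝ} (h : A.PosSemidef) (x : m → ℝ) : 0 ≤ x ⬝ᵥ A *ᵥ x := by
  simpa using h.dotProduct_mulVec_nonneg x

lemma commute_diag {U X : Matrix m m ℝ} (hU' : star U * U = 1) (hU : U * star U = 1)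
    {d e : m → ℝ} (hde : ∀ i j, d i = d j → e i = e j)
    (h : X * (U * diagonal d * star U) = (U * diagonal d * star U) * X) :
    X * (U * diagonal e * star U) = (U * diagonal e * star U) * X := by
  have hS : ∀ W : Matrix m m ℝ, star U * (U * W) = W := fun W => by
    rw [← Matrix.mul_assoc, hU', Matrix.one_mul]
  have hT : ∀ W : Matrix m m ℝ, U * (star U * W) = W := fun W => by
    rw [← Matrix.mul_assoc, hU, Matrix.one_mul]
  have hYd : (star U * X * U) * diagonal d = diagonal d * (star U * X * U) := by
    have h' := congrArg (fun Z => star U * (Z * U)) h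
    simp only [Matrix.mul_assoc, hS, hT, hU', hU, Matrix.mul_one, Matrix.one_mul] at h' ⊢
    exact h'
  have hYe : (star U * X * U) * diagonal e = diagonal e * (star U * X * U) := by
    ext i j
    have hij : ((star U * X * U) * diagonal d) i j = (diagonal d * (star U * X * U)) i j := by
      rw [hYd]
    rw [Matrix.mul_diagonal, Matrix.diagonal_mul] at hij
    rw [Matrix.mul_diagonal, Matrix.diagonal_mul]
    rcases eq_or_ne ((star U * X * U) i j) 0 with h0 | h0
    · simp [h0]
    · have hd : d j = d i := by
        have h2 : (star U * X * U) i j * d j = (star U * X * U) i j * d i := by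
          rw [hij]; ring
        exact mul_left_cancel₀ h0 h2
      rw [hde j i hd]; ring
  have h3 := congrArg (fun Z => U * (Z * star U)) hYe
  simp only [Matrix.mul_assoc, hS, hT, hU', hU, Matrix.mul_one, Matrix.one_mul] at h3 ⊢
  exact h3

lemma commute_sqrt {A X : Matrix m m ℝ} (hA : A.PosSemidef) (h : X * A = A * X) :
    X * hA.sqrt = hA.sqrt * X := by
  have hU' : star (hA.1.eigenvectorUnitary : Matrix m m ℝ) * (hA.1.eigenvectorUnitary : Matrix m m ℝ) = 1 :=
    Unitary.coe_star_mul_self _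
  have hU : (hA.1.eigenvectorUnitary : Matrix m m ℝ) * star (hA.1.eigenvectorUnitary : Matrix m m ℝ) = 1 :=
    Unitary.coe_mul_star_self _
  have hspec : A = (hA.1.eigenvectorUnitary : Matrix m m ℝ) *
      diagonal (RCLike.ofReal ∘ hA.1.eigenvalues) * star (hA.1.eigenvectorUnitary : Matrix m m ℝ) := by
    have h := hA.1.spectral_theorem; rwa [Unitary.conjStarAlgAut_apply] at h
  have hsqrt : hA.sqrt = (hA.1.eigenvectorUnitary : Matrix m m ℝ) *
      diagonal (RCLike.ofReal ∘ Real.sqrt ∘ hA.1.eigenvalues) *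
      star (hA.1.eigenvectorUnitary : Matrix m m ℝ) := rfl
  rw [hsqrt]
  apply commute_diag (d := RCLike.ofReal ∘ hA.1.eigenvalues) hU' hU
  · intro i j hij
    simp only [Function.comp_apply] at hij ⊢
    have h2 : hA.1.eigenvalues i = hA.1.eigenvalues j := by exact_mod_cast hij
    simp [h2]
  · rw [← hspec]; exact h

lemma sqrt_dot_le {A : Matrix m m ℝ} (hA : A.PosSemidef)
    (h : ∀ x, x ⬝ᵥ A *ᵥ x ≤ x ⬝ᵥ x) (x : m → ℝ) :
    x ⬝ᵥ hA.sqrt *ᵥ x ≤ x ⬝ᵥ x := by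
  have heig : ∀ i, hA.1.eigenvalues i ≤ 1 := by
    intro i
    have hv : A *ᵥ (WithLp.equiv 2 (m → ℝ)) (hA.1.eigenvectorBasis i) =
        hA.1.eigenvalues i • (WithLp.equiv 2 (m → ℝ)) (hA.1.eigenvectorBasis i) :=
      hA.1.mulVec_eigenvectorBasis i
    set v : m → ℝ := (WithLp.equiv 2 (m → ℝ)) (hA.1.eigenvectorBasis i) with hvdef
    have hnorm : v ⬝ᵥ v = 1 := by
      have h1 : ‖hA.1.eigenvectorBasis i‖ = 1 := hA.1.eigenvectorBasis.orthonormal.1 i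
      have h2 : v ⬝ᵥ v = ⟪hA.1.eigenvectorBasis i, hA.1.eigenvectorBasis i⟫ := by
        rw [PiLp.inner_apply]
        simp [dotProduct, hvdef, RCLike.inner_apply, sq]
      rw [h2, real_inner_self_eq_norm_sq, h1, one_pow]
    have hx := h v
    rw [hv, dotProduct_smul, smul_eq_mul, hnorm, mul_one] at hx
    exact hx
  set U := (hA.1.eigenvectorUnitary : Matrix m m ℝ) with hUdef
  have hU : U * star U = 1 := Unitary.coe_mul_star_self _
  have hsqrt : hA.sqrt = U * diagonal (RCLike.ofReal ∘ Real.sqrt ∘ hA.1.eigenvalues) * star U := rfl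
  have hone : (1 : Matrix m m ℝ) = U * diagonal (fun _ => (1:ℝ)) * star U := by
    rw [Matrix.diagonal_one, Matrix.mul_one, hU]
  have hdiff : (1 : Matrix m m ℝ) - hA.sqrt =
      U * diagonal (fun i => 1 - Real.sqrt (hA.1.eigenvalues i)) * star U := by
    rw [hsqrt]
    conv_lhs => rw [hone]
    rw [← Matrix.sub_mul, ← Matrix.mul_sub, Matrix.diagonal_sub]
    norm_num
  have hpsd : ((1 : Matrix m m ℝ) - hA.sqrt).PosSemidef := by
    rw [hdiff]
    have hd : (diagonal (fun i => 1 - Real.sqrt (hA.1.eigenvalues i))).PosSemidef := by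
      rw [posSemidef_diagonal_iff]
      intro i
      have h1 : Real.sqrt (hA.1.eigenvalues i) ≤ 1 := Real.sqrt_le_one.2 (heig i)
      linarith
    rw [Matrix.star_eq_conjTranspose]
    exact hd.mul_mul_conjTranspose_same U
  have hfin := psd_nonneg' hpsd x
  rw [Matrix.sub_mulVec, dotProduct_sub, one_mulVec] at hfin
  linarith
set_option maxHeartbeats 1000000 in
lemma key_construction {M : Matrix m m ℝ} (hM : M.PosDef) {J : Matrix m m ℝ}
    (hJt : Jᵀ = -J) (hJJ : J * J = -1)
    (hyp : ∀ x : m → ℝ, x ⬝ᵥ M *ᵥ x ≤ x ⬝ᵥ (J * M⁻¹ * Jᵀ) *ᵥ x) :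
    ∃ S : Matrix m m ℝ, Sᵀ = S ∧ IsUnit S.det ∧ S * J * S = J ∧
      ∀ x : m → ℝ, (S *ᵥ x) ⬝ᵥ M *ᵥ (S *ᵥ x) ≤ x ⬝ᵥ x := by
  have hJdet : IsUnit J.det := by
    have h : J.det * (-J).det = 1 := by
      rw [← Matrix.det_mul, mul_neg, hJJ, neg_neg, Matrix.det_one]
    exact IsUnit.of_mul_eq_one _ h
  have hJtJ : Jᵀ * J = 1 := by rw [hJt, neg_mul, hJJ, neg_neg]
  have hJJt : J * Jᵀ = 1 := by rw [hJt, mul_neg, hJJ, neg_neg]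
  have hJtdet : IsUnit Jᵀ.det := by rwa [Matrix.det_transpose]
  have hj2 : ∀ W : Matrix m m ℝ, Jᵀ * (J * W) = W := fun W => by
    rw [← Matrix.mul_assoc, hJtJ, Matrix.one_mul]
  have hMdet : IsUnit M.det := isUnit_iff_ne_zero.2 hM.det_pos.ne'
  set K := hM.posSemidef.sqrt with hKdef
  have hKpd : K.PosDef := pd_sqrt hM
  have hKK : K * K = M := hM.posSemidef.sqrt_mul_self
  have hKt : Kᵀ = K := tEq hKpd.isHermitian
  have hKdet : IsUnit K.det := isUnit_iff_ne_zero.2 hKpd.det_pos.ne'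
  have hKinvK : K⁻¹ * K = 1 := Matrix.nonsing_inv_mul _ hKdet
  have hKKinv : K * K⁻¹ = 1 := Matrix.mul_nonsing_inv _ hKdet
  have hKinvT : K⁻¹ᵀ = K⁻¹ := by rw [Matrix.transpose_nonsing_inv, hKt]
  have hKidet : IsUnit (K⁻¹).det := by
    rw [Matrix.det_nonsing_inv]
    rw [Ring.inverse_eq_inv']
    exact isUnit_iff_ne_zero.2 (inv_ne_zero hKpd.det_pos.ne')
  have hMinv : M⁻¹ = K⁻¹ * K⁻¹ := by rw [← hKK, Matrix.mul_inv_rev]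
  have hc1 : ∀ W : Matrix m m ℝ, K * (K⁻¹ * W) = W := fun W => by
    rw [← Matrix.mul_assoc, hKKinv, Matrix.one_mul]
  set D := K * J * K with hDdef
  have hDt : Dᵀ = -D := by
    rw [hDdef, Matrix.transpose_mul, Matrix.transpose_mul, hKt, hJt]
    simp [Matrix.mul_assoc]
  have hDdet : IsUnit D.det := by
    have h : D.det = K.det * J.det * K.det := by rw [hDdef, Matrix.det_mul, Matrix.det_mul]
    rw [h]; exact (hKdet.mul hJdet).mul hKdet
  have hDDi : D * D⁻¹ = 1 := Matrix.mul_nonsing_inv _ hDdet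
  have hDiD : D⁻¹ * D = 1 := Matrix.nonsing_inv_mul _ hDdet
  set C := D * Dᵀ with hCdef
  have hCpsd : C.PosSemidef := by
    rw [hCdef, ← ctEq']; exact Matrix.posSemidef_self_mul_conjTranspose D
  have hCD : D * C = C * D := by
    rw [hCdef, hDt]
    simp [Matrix.mul_assoc, mul_neg, neg_mul]
  have hCdet : IsUnit C.det := by
    have h : C.det = D.det * Dᵀ.det := by rw [hCdef, Matrix.det_mul]
    rw [h]; exact hDdet.mul (by rwa [Matrix.det_transpose])
  have hCpd : C.PosDef := psd_posdef_of_det hCpsd (isUnit_iff_ne_zero.1 hCdet)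
  have eC : K * (J * M * Jᵀ) * K = C := by
    rw [hCdef, hDdef, Matrix.transpose_mul, Matrix.transpose_mul, hKt, hJt, ← hKK]
    noncomm_ring
  have hCle : ∀ y : m → ℝ, y ⬝ᵥ C *ᵥ y ≤ y ⬝ᵥ y := by
    intro y
    have h1 := hyp (Jᵀ *ᵥ (K *ᵥ y))
    have hL : (Jᵀ *ᵥ (K *ᵥ y)) ⬝ᵥ M *ᵥ (Jᵀ *ᵥ (K *ᵥ y)) = y ⬝ᵥ C *ᵥ y := by
      rw [dot_congr, Matrix.transpose_transpose, dot_congr, hKt, eC]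
    have hR : (Jᵀ *ᵥ (K *ᵥ y)) ⬝ᵥ (J * M⁻¹ * Jᵀ) *ᵥ (Jᵀ *ᵥ (K *ᵥ y)) = y ⬝ᵥ y := by
      have e1 : J * M⁻¹ * Jᵀ = (Jᵀ)ᵀ * M⁻¹ * Jᵀ := by rw [Matrix.transpose_transpose]
      rw [e1, ← dot_congr]
      have e2 : Jᵀ *ᵥ (Jᵀ *ᵥ (K *ᵥ y)) = -(K *ᵥ y) := by
        rw [Matrix.mulVec_mulVec (K *ᵥ y) Jᵀ Jᵀ]
        have e21 : Jᵀ * Jᵀ = -1 := by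
          rw [hJt, neg_mul, mul_neg, hJJ, neg_neg]
        rw [e21, neg_mulVec, Matrix.one_mulVec]
      rw [e2, Matrix.mulVec_neg, dotProduct_neg, neg_dotProduct, neg_neg]
      rw [dot_congr, hKt, hMinv]
      have e3 : K * (K⁻¹ * K⁻¹) * K = 1 := by
        rw [← Matrix.mul_assoc K K⁻¹ K⁻¹, hKKinv, Matrix.one_mul, hKinvK]
      rw [e3, Matrix.one_mulVec]
    rw [hL, hR] at h1
    exact h1
  set L := hCpsd.sqrt with hLdef
  have hLpsd : L.PosSemidef := hCpsd.posSemidef_sqrt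
  have hLL : L * L = C := hCpsd.sqrt_mul_self
  have hLt : Lᵀ = L := tEq hLpsd.isHermitian
  have hLle : ∀ x, x ⬝ᵥ L *ᵥ x ≤ x ⬝ᵥ x := sqrt_dot_le hCpsd hCle
  have hDL : D * L = L * D := commute_sqrt hCpsd hCD
  have hLpd : L.PosDef := pd_sqrt hCpd
  set G := K⁻¹ * L * K⁻¹ with hGdef
  have hGpd : G.PosDef := by
    have h := posdef_conj hLpd (B := K⁻¹) hKidet
    rwa [hKinvT] at h
  have hDinv : D⁻¹ = K⁻¹ * (-J) * K⁻¹ := by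
    apply Matrix.inv_eq_right_inv
    rw [hDdef]
    calc K * J * K * (K⁻¹ * -J * K⁻¹)
        = K * (J * (K * (K⁻¹ * (-J * K⁻¹)))) := by simp only [Matrix.mul_assoc]
    _ = K * (J * (-J * K⁻¹)) := by rw [hc1]
    _ = K * K⁻¹ := by
        rw [neg_mul, mul_neg, ← Matrix.mul_assoc J J, hJJ, neg_one_mul, neg_neg]
    _ = 1 := hKKinv
  have hW : K⁻¹ * J * K⁻¹ = - D⁻¹ := by
    rw [hDinv]; simp [mul_neg, neg_mul]
  have hLDinv : L * D⁻¹ = D⁻¹ * L := by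
    calc L * D⁻¹ = D⁻¹ * (D * L) * D⁻¹ := by
          simp only [← Matrix.mul_assoc, hDiD, Matrix.one_mul]
    _ = D⁻¹ * (L * D) * D⁻¹ := by rw [hDL]
    _ = D⁻¹ * L := by
          simp only [Matrix.mul_assoc, hDDi, Matrix.mul_one]
  have hGJG : G * J * G = J := by
    have h1 : G * J * G = K⁻¹ * (L * (K⁻¹ * J * K⁻¹) * L) * K⁻¹ := by
      rw [hGdef]; simp only [Matrix.mul_assoc]
    have h2 : L * (K⁻¹ * J * K⁻¹) * L = D := by
      rw [hW, mul_neg, neg_mul, hLDinv, Matrix.mul_assoc, hLL, hCdef,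
        ← Matrix.mul_assoc, hDiD, Matrix.one_mul, hDt, neg_neg]
    rw [h1, h2, hDdef]
    calc K⁻¹ * (K * J * K) * K⁻¹
        = (K⁻¹ * K) * J * (K * K⁻¹) := by simp only [Matrix.mul_assoc]
    _ = J := by rw [hKinvK, hKKinv, Matrix.one_mul, Matrix.mul_one]
  have hGinv : G⁻¹ = J * G * Jᵀ := by
    apply Matrix.inv_eq_right_inv
    calc G * (J * G * Jᵀ) = (G * J * G) * Jᵀ := by simp only [Matrix.mul_assoc]
    _ = J * Jᵀ := by rw [hGJG]
    _ = 1 := hJJt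
  set S := hGpd.posSemidef.sqrt with hSdef
  have hSpd : S.PosDef := pd_sqrt hGpd
  have hSS : S * S = G := hGpd.posSemidef.sqrt_mul_self
  have hSt : Sᵀ = S := tEq hSpd.isHermitian
  have hSdet : IsUnit S.det := isUnit_iff_ne_zero.2 hSpd.det_pos.ne'
  have hYpd : (J * S * Jᵀ).PosDef := by
    have h := posdef_conj hSpd (B := Jᵀ) hJtdet
    rwa [Matrix.transpose_transpose] at h
  have hYY : (J * S * Jᵀ) * (J * S * Jᵀ) = G⁻¹ := by
    rw [hGinv]
    calc (J * S * Jᵀ) * (J * S * Jᵀ) = J * (S * (Jᵀ * (J * (S * Jᵀ)))) := by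
          simp only [Matrix.mul_assoc]
    _ = J * (S * (S * Jᵀ)) := by rw [hj2]
    _ = J * G * Jᵀ := by
          rw [← Matrix.mul_assoc S S, hSS]; simp only [Matrix.mul_assoc]
  have hSinv2 : S⁻¹ * S⁻¹ = G⁻¹ := by rw [← Matrix.mul_inv_rev, hSS]
  have hYS : J * S * Jᵀ = S⁻¹ := by
    apply hYpd.posSemidef.eq_of_sq_eq_sq hSpd.inv.posSemidef
    rw [sq, sq, hYY, hSinv2]
  have hSJS : S * J * S = J := by
    calc S * J * S = S * (J * S * Jᵀ) * J := by
          simp only [Matrix.mul_assoc, hJtJ, Matrix.mul_one]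
    _ = S * S⁻¹ * J := by rw [hYS]
    _ = J := by rw [Matrix.mul_nonsing_inv _ hSdet, Matrix.one_mul]
  have hGle : ∀ x, x ⬝ᵥ G *ᵥ x ≤ x ⬝ᵥ M⁻¹ *ᵥ x := by
    intro x
    have h1 : x ⬝ᵥ G *ᵥ x = (K⁻¹ *ᵥ x) ⬝ᵥ L *ᵥ (K⁻¹ *ᵥ x) := by
      rw [dot_congr, hKinvT, ← hGdef]
    have h2 : x ⬝ᵥ M⁻¹ *ᵥ x = (K⁻¹ *ᵥ x) ⬝ᵥ (K⁻¹ *ᵥ x) := by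
      rw [hMinv, ← Matrix.mulVec_mulVec, dot_shift, hKinvT]
    rw [h1, h2]; exact hLle _
  have hMG : ∀ y, y ⬝ᵥ M *ᵥ y ≤ y ⬝ᵥ G⁻¹ *ᵥ y := by
    intro y
    have h := inv_antitone hGpd hM.inv hGle y
    rwa [Matrix.nonsing_inv_nonsing_inv _ hMdet] at h
  refine ⟨S, hSt, hSdet, hSJS, fun x => ?_⟩
  have h1 := hMG (S *ᵥ x)
  have h2 : (S *ᵥ x) ⬝ᵥ G⁻¹ *ᵥ (S *ᵥ x) = x ⬝ᵥ x := by
    rw [dot_congr, hSt]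
    have e : S * G⁻¹ * S = 1 := by
      rw [← hSinv2]
      calc S * (S⁻¹ * S⁻¹) * S = (S * S⁻¹) * (S⁻¹ * S) := by simp only [Matrix.mul_assoc]
      _ = 1 := by
          rw [Matrix.mul_nonsing_inv _ hSdet, Matrix.nonsing_inv_mul _ hSdet, Matrix.one_mul]
    rw [e, Matrix.one_mulVec]
  rw [h2] at h1
  exact h1

variable {m : Type*} [Fintype m] [DecidableEq m]

lemma dot_shift' (A : Matrix m m ℝ) (x y : m → ℝ) : (A *ᵥ x) ⬝ᵥ y = x ⬝ᵥ Aᵀ *ᵥ y := by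
  rw [dot_shift Aᵀ x y, transpose_transpose]

lemma inner_eq_dot (x y : EuclideanSpace ℝ m) :
    ⟪x, y⟫ = ((WithLp.equiv 2 (m → ℝ)) x) ⬝ᵥ ((WithLp.equiv 2 (m → ℝ)) y) := by
  rw [PiLp.inner_apply]
  simp [dotProduct, mul_comm]

lemma tv_toEL (A : Matrix m m ℝ) (z : EuclideanSpace ℝ m) :
    (WithLp.equiv 2 (m → ℝ)) (Matrix.toEuclideanLin A z) =
      A *ᵥ ((WithLp.equiv 2 (m → ℝ)) z) :=
  Matrix.ofLp_toEuclideanLin_apply A z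

lemma norm_sq_eq_dot (z : EuclideanSpace ℝ m) :
    ‖z‖ ^ 2 = ((WithLp.equiv 2 (m → ℝ)) z) ⬝ᵥ ((WithLp.equiv 2 (m → ℝ)) z) := by
  rw [← real_inner_self_eq_norm_sq, inner_eq_dot]


end SGAux


open Matrix in
lemma qf_eq' {m : Type*} [Fintype m] [DecidableEq m] (A : Matrix m m ℝ) (z : EuclideanSpace ℝ m) :
    qf A z = ((WithLp.equiv 2 (m → ℝ)) z) ⬝ᵥ A *ᵥ ((WithLp.equiv 2 (m → ℝ)) z) := by
  rw [show qf A z = ⟪(Matrix.toEuclideanLin A) z, z⟫ from rfl, SGAux.inner_eq_dot,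
    SGAux.tv_toEL, dotProduct_comm]

open Matrix in
lemma symp_eq' (n : ℕ) (z z' : PS n) :
    symp n z z' = (Jmat n *ᵥ ((WithLp.equiv 2 _) z)) ⬝ᵥ ((WithLp.equiv 2 _) z') := by
  rw [show symp n z z' = ⟪(Matrix.toEuclideanLin (Jmat n)) z, z'⟫ from rfl,
    SGAux.inner_eq_dot, SGAux.tv_toEL]

open Matrix in
lemma qf_smul' {m : Type*} [Fintype m] [DecidableEq m] (A : Matrix m m ℝ) (t : ℝ)
    (z : EuclideanSpace ℝ m) : qf A (t • z) = t ^ 2 * qf A z := by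
  rw [qf_eq', qf_eq']
  have e : (WithLp.equiv 2 (m → ℝ)) (t • z) = t • ((WithLp.equiv 2 (m → ℝ)) z) := rfl
  rw [e, Matrix.mulVec_smul, dotProduct_smul, smul_dotProduct,
    smul_eq_mul, smul_eq_mul]
  ring

open Matrix in
lemma Jmat_t (n : ℕ) : (Jmat n)ᵀ = -(Jmat n) := by
  simp [Jmat, Matrix.fromBlocks_transpose, Matrix.fromBlocks_neg]

open Matrix in
lemma Jmat_sq (n : ℕ) : Jmat n * Jmat n = -1 := by
  rw [Jmat, Matrix.fromBlocks_multiply]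
  rw [show (-1 : Matrix (Fin n ⊕ Fin n) (Fin n ⊕ Fin n) ℝ) = -(Matrix.fromBlocks 1 0 0 1) by
    rw [Matrix.fromBlocks_one], Matrix.fromBlocks_neg]
  congr 1 <;> simp

/-- the ellipsoid `Ω_M = {⟨Mz,z⟩ ≤ ℏ}` (`M` symmetric positive definite) is
quantum admissible (contains a quantum blob `S(B²ⁿ(√ℏ))`, `S` symplectic) if and only if
it contains its symplectic polar dual: `Ω_M^{ℏ,σ} ⊆ Ω_M`. -/
theorem stmt6 (n : ℕ) (ℏ : ℝ) (hℏ : 0 < ℏ)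
    (M : Matrix (Fin n ⊕ Fin n) (Fin n ⊕ Fin n) ℝ) (hM : M.PosDef) :
    (∃ S : PS n ≃ₗ[ℝ] PS n, IsSymplectic S ∧
        ⇑S '' closedBall (0 : PS n) (Real.sqrt ℏ) ⊆ {z | qf M z ≤ ℏ}) ↔
      sympDual n ℏ {z | qf M z ≤ ℏ} ⊆ {z | qf M z ≤ ℏ} := by
  classical
  have hJt : (Jmat n)ᵀ = -(Jmat n) := Jmat_t n
  have hJJ : Jmat n * Jmat n = -1 := Jmat_sq n
  have hMt : Mᵀ = M := SGAux.tEq hM.isHermitian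
  constructor
  · rintro ⟨S, hSymp, hBlob⟩ z' hz'
    set u := S.symm z' with hu
    have hz'u : S u = z' := S.apply_symm_apply z'
    have hule : ‖u‖ ≤ Real.sqrt ℏ := by
      rcases eq_or_ne u 0 with h0 | h0
      · simp [h0, Real.sqrt_nonneg]
      · set f := (WithLp.equiv 2 ((Fin n ⊕ Fin n) → ℝ)) u with hf
        set c := Real.sqrt ℏ / ‖u‖ with hc
        have hupos : 0 < ‖u‖ := norm_pos_iff.2 h0
        have hcpos : 0 < c := div_pos (Real.sqrt_pos.2 hℏ) hupos
        set w : PS n := (WithLp.equiv 2 ((Fin n ⊕ Fin n) → ℝ)).symm (-(c • (Jmat n *ᵥ f)))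
          with hw
        have htvw : (WithLp.equiv 2 ((Fin n ⊕ Fin n) → ℝ)) w = -(c • (Jmat n *ᵥ f)) := by
          rw [hw]; exact (WithLp.equiv 2 _).apply_symm_apply _
        have hJw : Jmat n *ᵥ ((WithLp.equiv 2 ((Fin n ⊕ Fin n) → ℝ)) w) = c • f := by
          rw [htvw, Matrix.mulVec_neg, Matrix.mulVec_smul, Matrix.mulVec_mulVec, hJJ]
          have h1 : (-1 : Matrix (Fin n ⊕ Fin n) (Fin n ⊕ Fin n) ℝ) *ᵥ f = -f := by
            rw [Matrix.neg_mulVec, Matrix.one_mulVec]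
          rw [h1]; simp
        have hff : f ⬝ᵥ f = ‖u‖ ^ 2 := (SGAux.norm_sq_eq_dot u).symm
        have hwnorm : ‖w‖ = Real.sqrt ℏ := by
          have h1 : ‖w‖ ^ 2 = ℏ := by
            rw [SGAux.norm_sq_eq_dot, htvw]
            rw [neg_dotProduct, dotProduct_neg, neg_neg,
              smul_dotProduct, dotProduct_smul]
            have h2 : (Jmat n *ᵥ f) ⬝ᵥ (Jmat n *ᵥ f) = f ⬝ᵥ f := by
              rw [SGAux.dot_shift' (Jmat n) f (Jmat n *ᵥ f), Matrix.mulVec_mulVec, hJt,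
                neg_mul, hJJ, neg_neg, Matrix.one_mulVec]
            rw [h2, hff, smul_eq_mul, smul_eq_mul, hc]
            field_simp
            linear_combination Real.mul_self_sqrt hℏ.le
          have h2 : (0:ℝ) ≤ ‖w‖ := norm_nonneg w
          nlinarith [Real.sq_sqrt hℏ.le, Real.sqrt_nonneg ℏ]
        have hmem : S w ∈ {z | qf M z ≤ ℏ} :=
          hBlob ⟨w, by simp [Metric.mem_closedBall, dist_zero_right, hwnorm], rfl⟩
        have hdualw := hz' (S w) hmem
        have hsymp : symp n (S w) z' = Real.sqrt ℏ * ‖u‖ := by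
          rw [← hz'u, hSymp w u, symp_eq', hJw, smul_dotProduct, smul_eq_mul, ← hf, hff,
            hc]
          field_simp
        rw [hsymp] at hdualw
        have hs := Real.sq_sqrt hℏ.le
        have hspos := Real.sqrt_pos.2 hℏ
        nlinarith
    exact hBlob ⟨u, by simpa [Metric.mem_closedBall, dist_zero_right] using hule, hz'u⟩
  · intro hdual
    have hJdet : IsUnit (Jmat n).det := by
      have h : (Jmat n).det * (-(Jmat n)).det = 1 := by
        rw [← Matrix.det_mul, mul_neg, hJJ, neg_neg, Matrix.det_one]
      exact IsUnit.of_mul_eq_one _ h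
    have hJtdet : IsUnit ((Jmat n)ᵀ).det := by rwa [Matrix.det_transpose]
    have hMdet : IsUnit M.det := isUnit_iff_ne_zero.2 hM.det_pos.ne'
    set A := Jmat n * M⁻¹ * (Jmat n)ᵀ with hA
    have hApd : A.PosDef := by
      have h := SGAux.posdef_conj hM.inv (B := (Jmat n)ᵀ) hJtdet
      rwa [Matrix.transpose_transpose] at h
    have hsub : ∀ z', qf A z' ≤ ℏ → z' ∈ sympDual n ℏ {z | qf M z ≤ ℏ} := by
      intro z' h' z hz
      simp only [Set.mem_setOf_eq] at hz
      rw [symp_eq']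
      set f := (WithLp.equiv 2 ((Fin n ⊕ Fin n) → ℝ)) z with hfd
      set g := (WithLp.equiv 2 ((Fin n ⊕ Fin n) → ℝ)) z' with hgd
      have hcs := SGAux.cs hM.inv.posSemidef (M *ᵥ f) ((Jmat n)ᵀ *ᵥ g)
      have e1 : (M *ᵥ f) ⬝ᵥ M⁻¹ *ᵥ ((Jmat n)ᵀ *ᵥ g) = (Jmat n *ᵥ f) ⬝ᵥ g := by
        rw [SGAux.dot_shift' M f, hMt, Matrix.mulVec_mulVec,
          Matrix.mul_nonsing_inv _ hMdet, Matrix.one_mulVec,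
          SGAux.dot_shift' (Jmat n) f g]
      have e2 : (M *ᵥ f) ⬝ᵥ M⁻¹ *ᵥ (M *ᵥ f) = qf M z := by
        rw [SGAux.dot_congr, hMt, Matrix.mul_assoc, Matrix.nonsing_inv_mul _ hMdet,
          Matrix.mul_one, ← qf_eq']
      have e3 : ((Jmat n)ᵀ *ᵥ g) ⬝ᵥ M⁻¹ *ᵥ ((Jmat n)ᵀ *ᵥ g) = qf A z' := by
        rw [SGAux.dot_congr, Matrix.transpose_transpose, ← hA, ← qf_eq']
      rw [e1, e2, e3] at hcs
      have h0m : 0 ≤ qf M z := by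
        rw [qf_eq']; exact SGAux.psd_nonneg hM.posSemidef _
      have h0a : 0 ≤ qf A z' := by
        rw [qf_eq']; exact SGAux.psd_nonneg hApd.posSemidef _
      nlinarith [hcs, hz, h', hℏ, sq_nonneg ((Jmat n *ᵥ f) ⬝ᵥ g - ℏ),
        sq_nonneg ((Jmat n *ᵥ f) ⬝ᵥ g + ℏ)]
    have hchain : ∀ z', qf A z' ≤ ℏ → qf M z' ≤ ℏ := fun z' h => hdual (hsub z' h)
    have hscale : ∀ z', qf M z' ≤ qf A z' := by
      intro z'
      rcases eq_or_ne z' 0 with h0 | h0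
      · subst h0
        rw [qf_eq', qf_eq']
        simp
      · have hApos : 0 < qf A z' := by
          rw [qf_eq']
          apply SGAux.pd_pos hApd
          intro hzero
          apply h0
          have := congrArg (WithLp.equiv 2 ((Fin n ⊕ Fin n) → ℝ)).symm hzero
          simpa using this
        set t := Real.sqrt (ℏ / qf A z') with ht
        have htpos : 0 < t := Real.sqrt_pos.2 (div_pos hℏ hApos)
        have ht2 : t ^ 2 = ℏ / qf A z' := Real.sq_sqrt (div_pos hℏ hApos).le
        have hqA : qf A (t • z') = ℏ := by
          rw [qf_smul', ht2]
          field_simp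
        have hMq := hchain (t • z') hqA.le
        rw [qf_smul'] at hMq
        have h1 : t ^ 2 * qf M z' ≤ t ^ 2 * qf A z' := by
          calc t ^ 2 * qf M z' ≤ ℏ := hMq
          _ = t ^ 2 * qf A z' := by rw [ht2]; field_simp
        exact le_of_mul_le_mul_left h1 (by positivity)
    have hyp : ∀ x : (Fin n ⊕ Fin n) → ℝ, x ⬝ᵥ M *ᵥ x ≤ x ⬝ᵥ A *ᵥ x := by
      intro x
      have h := hscale ((WithLp.equiv 2 ((Fin n ⊕ Fin n) → ℝ)).symm x)
      rw [qf_eq', qf_eq'] at h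
      simpa using h
    obtain ⟨S, hSt, hSdet, hSJS, hbound⟩ := SGAux.key_construction hM hJt hJJ hyp
    refine ⟨LinearEquiv.ofLinear (Matrix.toEuclideanLin S) (Matrix.toEuclideanLin S⁻¹)
      ?_ ?_, ?_, ?_⟩
    · apply LinearMap.ext; intro z
      apply (WithLp.equiv 2 ((Fin n ⊕ Fin n) → ℝ)).injective
      rw [LinearMap.comp_apply, SGAux.tv_toEL, SGAux.tv_toEL, Matrix.mulVec_mulVec,
        Matrix.mul_nonsing_inv _ hSdet, Matrix.one_mulVec, LinearMap.id_apply]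
    · apply LinearMap.ext; intro z
      apply (WithLp.equiv 2 ((Fin n ⊕ Fin n) → ℝ)).injective
      rw [LinearMap.comp_apply, SGAux.tv_toEL, SGAux.tv_toEL, Matrix.mulVec_mulVec,
        Matrix.nonsing_inv_mul _ hSdet, Matrix.one_mulVec, LinearMap.id_apply]
    · intro z z'
      simp only [LinearEquiv.ofLinear_apply]
      rw [symp_eq', symp_eq', SGAux.tv_toEL, SGAux.tv_toEL, Matrix.mulVec_mulVec,
        SGAux.dot_shift' (Jmat n * S), Matrix.mulVec_mulVec,
        SGAux.dot_shift' (Jmat n)]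
      have e : (Jmat n * S)ᵀ * S = (Jmat n)ᵀ := by
        rw [Matrix.transpose_mul, hSt, Matrix.mul_assoc, hJt, neg_mul, mul_neg,
          ← Matrix.mul_assoc, hSJS]
      rw [e]
    · rintro y ⟨x, hx, rfl⟩
      simp only [Set.mem_setOf_eq, LinearEquiv.ofLinear_apply]
      rw [qf_eq', SGAux.tv_toEL]
      have hb := hbound ((WithLp.equiv 2 ((Fin n ⊕ Fin n) → ℝ)) x)
      have hxn : ‖x‖ ≤ Real.sqrt ℏ := by
        simpa [Metric.mem_closedBall, dist_zero_right] using hx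
      have hx2 : ((WithLp.equiv 2 ((Fin n ⊕ Fin n) → ℝ)) x) ⬝ᵥ
          ((WithLp.equiv 2 ((Fin n ⊕ Fin n) → ℝ)) x) ≤ ℏ := by
        rw [← SGAux.norm_sq_eq_dot]
        nlinarith [norm_nonneg x, Real.sq_sqrt hℏ.le, Real.sqrt_nonneg ℏ]
      exact le_trans hb hx2
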